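/- In the AAF construction from OLA vectors, for any tree T and any component index i, the subtree of T rooted at the root of T(L_i) contains no leaf l_j with j < m_i; consequently the inheritance graph of the constructed forest admits (L_0, L_1, ..., L_k) as a topological ordering and is therefore acyclic. -/

import Mathlib

open scoped Classical

namespace OLA

/-- Rooted binary phylogenetic trees with `ℕ`-labeled leaves. -/
inductive BTree where
  | leaf (x : ℕ)
  | node (l r : BTree)
deriving DecidableEq

namespace BTree

def leafList : BTree → List ℕ
  | .leaf x => [x]
  | .node l r => leafList l ++ leafList r

def leafSet (t : BTree) : Finset ℕ := t.leafList.toFinset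

/-- `t` is a phylogenetic tree on the leaf set `{0, …, n-1}`. -/
def IsPhylo (t : BTree) (n : ℕ) : Prop :=
  t.leafList.Nodup ∧ t.leafSet = Finset.range n

def minLeaf : BTree → ℕ
  | .leaf x => x
  | .node l r => min (minLeaf l) (minLeaf r)

/-- OLA index of the root of a (sub)tree: leaf label, or minus the second
smallest of the minimal leaves of the two children. -/
def idx : BTree → ℤ
  | .leaf x => (x : ℤ)
  | .node l r => -(max (minLeaf l) (minLeaf r) : ℤ)

/-- Restriction `T^i` of `t` to the leaves labeled `≤ i` (suppressing
degree-2 nodes); `none` if no such leaf exists. -/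
def restrictLe : BTree → ℕ → Option BTree
  | .leaf x, i => if x ≤ i then some (.leaf x) else none
  | .node l r, i =>
    match restrictLe l i, restrictLe r i with
    | some l', some r' => some (.node l' r')
    | some l', none => some l'
    | none, some r' => some r'
    | none, none => none

/-- Restriction `T|_S` of `t` to the leaves in `S` (suppressing degree-2 nodes). -/
def restrictTo : BTree → Finset ℕ → Option BTree
  | .leaf x, S => if x ∈ S then some (.leaf x) else none
  | .node l r, S =>
    match restrictTo l S, restrictTo r S with
    | some l', some r' => some (.node l' r')
    | some l', none => some l'
    | none, some r' => some r'
    | none, none => none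

/-- OLA index of the sibling of the leaf labeled `i`, if it exists. -/
def siblingIdx : BTree → ℕ → Option ℤ
  | .leaf _, _ => none
  | .node l r, i =>
    if l = .leaf i then some r.idx
    else if r = .leaf i then some l.idx
    else (siblingIdx l i).orElse (fun _ => siblingIdx r i)

/-- The OLA vector entry of `t` at position `i ≥ 1`: the index of the sibling
of leaf `i` in the restriction of `t` to leaves `0, …, i`. -/
def olaEntry (t : BTree) (i : ℕ) : ℤ :=
  ((t.restrictLe i).bind (fun t' => t'.siblingIdx i)).getD 0

def relabel (f : ℕ → ℕ) : BTree → BTree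
  | .leaf x => .leaf (f x)
  | .node l r => .node (relabel f l) (relabel f r)

/-- The set of clusters (leaf sets of rooted subtrees) of `t`.  Two leaf-labeled
trees over the same leaf set are isomorphic iff their cluster sets coincide. -/
def clusters : BTree → Set (Set ℕ)
  | .leaf x => {{x}}
  | .node l r => insert {y | y ∈ (node l r).leafList} (clusters l ∪ clusters r)

def subtreeAt : BTree → List Bool → Option BTree
  | t, [] => some t
  | .leaf _, _ :: _ => none
  | .node l _, false :: p => subtreeAt l p
  | .node _ r, true :: p => subtreeAt r p

/-- `w` occurs as a rooted subtree (i.e. the subtree below a node) of `t`. -/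
def IsNode (t w : BTree) : Prop := ∃ p, t.subtreeAt p = some w

/-- The position of the least common ancestor of the leaves in `S`. -/
def lcaPos : BTree → Finset ℕ → List Bool
  | .leaf _, _ => []
  | .node l r, S =>
    if S ⊆ l.leafSet then false :: lcaPos l S
    else if S ⊆ r.leafSet then true :: lcaPos r S
    else []

/-- Positions of the nodes of the minimal spanning subtree `T(S)`. -/
def spanNodes (t : BTree) (S : Finset ℕ) : Set (List Bool) :=
  {p | t.lcaPos S <+: p ∧ ∃ u, t.subtreeAt p = some u ∧ ∃ x ∈ S, x ∈ u.leafList}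

end BTree

/-- OLA vector of tree `t` under the leaf ordering `σ` (leaf `x` is the
`σ x`-th leaf in the order). -/
def ola (t : BTree) (σ : Equiv.Perm ℕ) (i : ℕ) : ℤ :=
  (t.relabel σ).olaEntry i

/-- `σ` is a valid leaf ordering of the leaf set `{0, …, n-1}`. -/
def IsOrdering (σ : Equiv.Perm ℕ) (n : ℕ) : Prop := ∀ x < n, σ x < n

/-- The set of (corrected) mismatched indices among `{1, …, i}` of a family of
OLA vectors: an index is mismatched if two of the vectors differ there, or if
all vectors place that leaf above the internal node created by an
already-mismatched leaf. -/
noncomputable def mismatch {ι : Type*} (v : ι → ℕ → ℤ) : ℕ → Finset ℕ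
  | 0 => ∅
  | i + 1 =>
    let M := mismatch v i
    if (∃ a b : ι, v a (i+1) ≠ v b (i+1)) ∨ (∃ j ∈ M, ∀ a : ι, v a (i+1) = -(j : ℤ))
    then insert (i+1) M else M

/-- Corrected OLA distance of a family of OLA vectors of trees on `n` leaves. -/
noncomputable def corrDist {ι : Type*} (v : ι → ℕ → ℤ) (n : ℕ) : ℕ :=
  (mismatch v (n-1)).card

/-- Hamming OLA distance: the number of indices where at least two vectors differ. -/
noncomputable def hamDist {ι : Type*} (v : ι → ℕ → ℤ) (n : ℕ) : ℕ :=
  ((Finset.Icc 1 (n-1)).filter fun i => ∃ a b : ι, v a i ≠ v b i).card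

/-- `comp` is an agreement forest for the trees `ts` over leaf set `{0,…,n-1}`:
components have pairwise disjoint leaf sets partitioning the full leaf set,
each tree restricted to a component's leaves is isomorphic to the component,
and the spanning subtrees are node-disjoint in each tree. -/
def IsAF {ι : Type*} (ts : ι → BTree) (n : ℕ) {f : ℕ} (comp : Fin f → BTree) : Prop :=
  (∀ i, (comp i).leafList.Nodup) ∧
  (∀ i j, i ≠ j → Disjoint (comp i).leafSet (comp j).leafSet) ∧
  (Finset.univ.biUnion (fun i => (comp i).leafSet) = Finset.range n) ∧
  (∀ a i, ∃ c, (ts a).restrictTo (comp i).leafSet = some c ∧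
      c.clusters = (comp i).clusters) ∧
  (∀ a i j, i ≠ j →
      Disjoint (BTree.spanNodes (ts a) ((comp i).leafSet))
               (BTree.spanNodes (ts a) ((comp j).leafSet)))

/-- Edge of the inheritance graph: some tree has a directed path from the root
of the spanning subtree of component `i` down to that of component `j`. -/
def inhEdge {ι : Type*} (ts : ι → BTree) {f : ℕ} (comp : Fin f → BTree)
    (i j : Fin f) : Prop :=
  i ≠ j ∧ ∃ a, (BTree.lcaPos (ts a) ((comp i).leafSet)) <+:
      (BTree.lcaPos (ts a) ((comp j).leafSet))

/-- `comp` is an acyclic agreement forest for `ts`. -/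
def IsAAF {ι : Type*} (ts : ι → BTree) (n : ℕ) {f : ℕ} (comp : Fin f → BTree) : Prop :=
  IsAF ts n comp ∧ ∀ i, ¬ Relation.TransGen (inhEdge ts comp) i i

/-- Size of a maximum acyclic agreement forest (an AAF with fewest components). -/
noncomputable def maafSize {ι : Type*} (ts : ι → BTree) (n : ℕ) : ℕ :=
  sInf {f | ∃ comp : Fin f → BTree, IsAAF ts n comp}

end OLA
namespace OLA

/-- See statement 9: component assignment in the AAF construction. -/
noncomputable def belongs (M : Finset ℕ) (v : ℕ → ℤ) : ℕ → ℕ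
  | j =>
    if j ∈ M then (M.filter (· ≤ j)).card
    else if h : (v j).natAbs < j then belongs M v (v j).natAbs else 0
  termination_by j => j

/-- The `i`-th mismatched position (`m_0 = 0`). -/
noncomputable def mVal (M : Finset ℕ) (i : ℕ) : ℕ :=
  if i = 0 then 0 else (M.sort (· ≤ ·)).getD (i - 1) 0
namespace BTree

lemma leafList_ne_nil : ∀ t : BTree, t.leafList ≠ []
  | .leaf x => by simp [leafList]
  | .node l r => by simp [leafList, leafList_ne_nil l]

lemma minLeaf_mem : ∀ t : BTree, t.minLeaf ∈ t.leafList
  | .leaf x => by simp [leafList, minLeaf]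
  | .node l r => by
    rcases min_cases l.minLeaf r.minLeaf with ⟨h, _⟩ | ⟨h, _⟩ <;>
      simp [leafList, minLeaf, h, minLeaf_mem l, minLeaf_mem r]

lemma minLeaf_le {t : BTree} {y : ℕ} (hy : y ∈ t.leafList) : t.minLeaf ≤ y := by
  induction t with
  | leaf x => simp_all [leafList, minLeaf]
  | node l r ihl ihr =>
    simp only [leafList, List.mem_append] at hy
    rcases hy with h | h
    · exact le_trans (min_le_left _ _) (ihl h)
    · exact le_trans (min_le_right _ _) (ihr h)

lemma mem_leafSet {t : BTree} {x : ℕ} : x ∈ t.leafSet ↔ x ∈ t.leafList := by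
  simp [leafSet]

lemma nodup_node {l r : BTree} (h : (BTree.node l r).leafList.Nodup) :
    l.leafList.Nodup ∧ r.leafList.Nodup ∧ ∀ x ∈ l.leafList, x ∉ r.leafList := by
  simp [leafList, List.nodup_append] at h
  exact ⟨h.1, h.2.1, fun x hx hx' => h.2.2 x hx x hx' rfl⟩

/-- subtreeAt basic lemmas -/
lemma subtreeAt_append (t : BTree) (p q : List Bool) :
    t.subtreeAt (p ++ q) = (t.subtreeAt p).bind (fun c => c.subtreeAt q) := by
  induction p generalizing t with
  | nil => simp [subtreeAt]
  | cons b p ih =>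
    cases t with
    | leaf x => simp [subtreeAt]
    | node l r => cases b <;> simp [subtreeAt, ih]

lemma isNode_self (t : BTree) : t.IsNode t := ⟨[], by simp [subtreeAt]⟩

lemma isNode_node_iff {l r c : BTree} :
    (BTree.node l r).IsNode c ↔ c = BTree.node l r ∨ l.IsNode c ∨ r.IsNode c := by
  constructor
  · rintro ⟨p, hp⟩
    cases p with
    | nil => left; simpa [subtreeAt] using hp.symm
    | cons b p =>
      cases b
      · exact Or.inr (Or.inl ⟨p, hp⟩)
      · exact Or.inr (Or.inr ⟨p, hp⟩)
  · rintro (rfl | ⟨p, hp⟩ | ⟨p, hp⟩)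
    · exact isNode_self _
    · exact ⟨false :: p, hp⟩
    · exact ⟨true :: p, hp⟩

lemma IsNode.leaf_sub {t c : BTree} (h : t.IsNode c) : ∀ y ∈ c.leafList, y ∈ t.leafList := by
  induction t with
  | leaf x =>
    obtain ⟨p, hp⟩ := h
    cases p with
    | nil => simp [subtreeAt] at hp; subst hp; exact fun y hy => hy
    | cons b p => simp [subtreeAt] at hp
  | node l r ihl ihr =>
    rcases isNode_node_iff.1 h with rfl | h | h
    · exact fun y hy => hy
    · exact fun y hy => by simp [leafList, ihl h y hy]
    · exact fun y hy => by simp [leafList, ihr h y hy]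

lemma isNode_leaf_of_mem {t : BTree} {x : ℕ} (h : x ∈ t.leafList) : t.IsNode (.leaf x) := by
  induction t with
  | leaf y => simp [leafList] at h; subst h; exact isNode_self _
  | node l r ihl ihr =>
    simp only [leafList, List.mem_append] at h
    rcases h with h | h
    · exact isNode_node_iff.2 (Or.inr (Or.inl (ihl h)))
    · exact isNode_node_iff.2 (Or.inr (Or.inr (ihr h)))

end BTree
namespace BTree

/-- leaves of a restriction, simultaneously with the none case. -/
lemma restrictLe_leafList (t : BTree) (j : ℕ) :
    (∀ u, t.restrictLe j = some u → u.leafList = t.leafList.filter (· ≤ j)) ∧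
    (t.restrictLe j = none → t.leafList.filter (· ≤ j) = []) := by
  induction t with
  | leaf x =>
    by_cases h : x ≤ j <;> simp [restrictLe, leafList, h]
  | node l r ihl ihr =>
    simp only [leafList, List.filter_append]
    constructor
    · intro u hu
      simp only [restrictLe] at hu
      rcases hl : l.restrictLe j with _ | ul <;> rcases hr : r.restrictLe j with _ | ur <;>
        simp [hl, hr] at hu
      · rw [← hu, ihl.2 hl, ihr.1 ur hr]; simp [leafList]
      · rw [← hu, ihl.1 ul hl, ihr.2 hr]; simp [leafList]
      · rw [← hu, leafList, ihl.1 ul hl, ihr.1 ur hr]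
    · intro hu
      simp only [restrictLe] at hu
      rcases hl : l.restrictLe j with _ | ul <;> rcases hr : r.restrictLe j with _ | ur <;>
        simp [hl, hr] at hu
      rw [ihl.2 hl, ihr.2 hr]; rfl

lemma restrictLe_some_of_mem {t : BTree} {x j : ℕ} (hx : x ∈ t.leafList) (hxj : x ≤ j) :
    ∃ u, t.restrictLe j = some u := by
  rcases h : t.restrictLe j with _ | u
  · have h2 := (restrictLe_leafList t j).2 h
    have h3 : x ∈ t.leafList.filter (· ≤ j) := List.mem_filter.2 ⟨hx, by simpa using hxj⟩
    rw [h2] at h3; simp at h3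
  · exact ⟨u, rfl⟩

lemma restrictLe_eq_self {t : BTree} {j : ℕ} (h : ∀ x ∈ t.leafList, x ≤ j) :
    t.restrictLe j = some t := by
  induction t with
  | leaf x => simp [restrictLe, h x (by simp [leafList])]
  | node l r ihl ihr =>
    simp only [leafList, List.mem_append] at h
    simp [restrictLe, ihl (fun x hx => h x (Or.inl hx)), ihr (fun x hx => h x (Or.inr hx))]

/-- `t'` is obtained from `t` by attaching the leaf `x` onto some edge
(possibly above the root). -/
inductive Ins (x : ℕ) : BTree → BTree → Prop
  | top_r (t : BTree) : Ins x t (.node t (.leaf x))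
  | top_l (t : BTree) : Ins x t (.node (.leaf x) t)
  | left {l l'} (r : BTree) : Ins x l l' → Ins x (.node l r) (.node l' r)
  | right (l : BTree) {r r'} : Ins x r r' → Ins x (.node l r) (.node l r')

lemma Ins.mem_leafList {x : ℕ} {t t' : BTree} (h : Ins x t t') :
    ∀ y, y ∈ t'.leafList ↔ y = x ∨ y ∈ t.leafList := by
  induction h with
  | top_r t => intro y; simp [leafList]; try tauto
  | top_l t => intro y; simp [leafList]; try tauto
  | left r h ih => intro y; simp only [leafList, List.mem_append, ih y]; tauto
  | right l h ih => intro y; simp only [leafList, List.mem_append, ih y]; tauto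

lemma Ins.sublist {x : ℕ} {t t' : BTree} (h : Ins x t t') :
    t.leafList.Sublist t'.leafList := by
  induction h with
  | top_r t => simpa [leafList] using List.sublist_append_left _ _
  | top_l t => simpa [leafList] using List.sublist_cons_self _ _
  | left r h ih => exact List.Sublist.append_right ih _
  | right l h ih => exact List.Sublist.append_left ih _

lemma Ins.exists_sib {x : ℕ} {t t' : BTree} (h : Ins x t t') :
    ∃ w, t'.IsNode (.node w (.leaf x)) ∨ t'.IsNode (.node (.leaf x) w) := by
  induction h with
  | top_r t => exact ⟨t, Or.inl (isNode_self _)⟩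
  | top_l t => exact ⟨t, Or.inr (isNode_self _)⟩
  | left r h ih =>
    obtain ⟨w, hw | hw⟩ := ih
    · exact ⟨w, Or.inl (isNode_node_iff.2 (Or.inr (Or.inl hw)))⟩
    · exact ⟨w, Or.inr (isNode_node_iff.2 (Or.inr (Or.inl hw)))⟩
  | right l h ih =>
    obtain ⟨w, hw | hw⟩ := ih
    · exact ⟨w, Or.inl (isNode_node_iff.2 (Or.inr (Or.inr hw)))⟩
    · exact ⟨w, Or.inr (isNode_node_iff.2 (Or.inr (Or.inr hw)))⟩

/-- The restriction to `≤ j+1` is obtained from the restriction to `≤ j` by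
inserting the leaf `j+1`, when `j+1` is a leaf of `t`. -/
lemma restrictLe_succ_notMem {t : BTree} {j : ℕ} (h : (j+1) ∉ t.leafList) :
    t.restrictLe (j+1) = t.restrictLe j := by
  induction t with
  | leaf x =>
    simp only [leafList, List.mem_singleton] at h
    by_cases hx : x ≤ j
    · simp [restrictLe, hx, Nat.le_succ_of_le hx]
    · have : ¬ x ≤ j + 1 := by omega
      simp [restrictLe, hx, this]
  | node l r ihl ihr =>
    simp only [leafList, List.mem_append, not_or] at h
    rw [restrictLe, restrictLe, ihl h.1, ihr h.2]

lemma restrictLe_succ_mem {t : BTree} {j : ℕ} (hnd : t.leafList.Nodup)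
    (h : (j+1) ∈ t.leafList) :
    (t.restrictLe j = none → t.restrictLe (j+1) = some (.leaf (j+1))) ∧
    (∀ u, t.restrictLe j = some u → ∃ u', t.restrictLe (j+1) = some u' ∧ Ins (j+1) u u') := by
  induction t with
  | leaf x =>
    simp only [leafList, List.mem_singleton] at h
    subst h
    constructor
    · intro _; simp [restrictLe]
    · intro u hu; simp [restrictLe] at hu
  | node l r ihl ihr =>
    obtain ⟨hndl, hndr, hdisj⟩ := nodup_node hnd
    simp only [leafList, List.mem_append] at h
    rcases h with h | h
    · -- j+1 in left
      have hnr : (j+1) ∉ r.leafList := hdisj _ h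
      have hrr : r.restrictLe (j+1) = r.restrictLe j := restrictLe_succ_notMem hnr
      rcases hlj : l.restrictLe j with _ | ul
      · have hl1 : l.restrictLe (j+1) = some (.leaf (j+1)) := (ihl hndl h).1 hlj
        rcases hrj : r.restrictLe j with _ | ur
        · constructor
          · intro _; rw [restrictLe, hl1, hrr, hrj]
          · intro u hu; rw [restrictLe, hlj, hrj] at hu; simp at hu
        · constructor
          · intro hnone; rw [restrictLe, hlj, hrj] at hnone; simp at hnone
          · intro u hu
            rw [restrictLe, hlj, hrj] at hu
            simp only [Option.some.injEq] at hu
            refine ⟨.node (.leaf (j+1)) ur, ?_, ?_⟩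
            · rw [restrictLe, hl1, hrr, hrj]
            · rw [← hu]; exact Ins.top_l _
      · obtain ⟨ul', hul', hins⟩ := (ihl hndl h).2 ul hlj
        rcases hrj : r.restrictLe j with _ | ur
        · constructor
          · intro hnone; rw [restrictLe, hlj, hrj] at hnone; simp at hnone
          · intro u hu
            rw [restrictLe, hlj, hrj] at hu
            simp only [Option.some.injEq] at hu
            exact ⟨ul', by rw [restrictLe, hul', hrr, hrj], by rw [← hu]; exact hins⟩
        · constructor
          · intro hnone; rw [restrictLe, hlj, hrj] at hnone; simp at hnone
          · intro u hu
            rw [restrictLe, hlj, hrj] at hu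
            simp only [Option.some.injEq] at hu
            exact ⟨.node ul' ur, by rw [restrictLe, hul', hrr, hrj],
              by rw [← hu]; exact Ins.left _ hins⟩
    · -- j+1 in right
      have hnl : (j+1) ∉ l.leafList := fun hc => hdisj _ hc h
      have hll : l.restrictLe (j+1) = l.restrictLe j := restrictLe_succ_notMem hnl
      rcases hrj : r.restrictLe j with _ | ur
      · have hr1 : r.restrictLe (j+1) = some (.leaf (j+1)) := (ihr hndr h).1 hrj
        rcases hlj : l.restrictLe j with _ | ul
        · constructor
          · intro _; rw [restrictLe, hr1, hll, hlj]
          · intro u hu; rw [restrictLe, hlj, hrj] at hu; simp at hu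
        · constructor
          · intro hnone; rw [restrictLe, hlj, hrj] at hnone; simp at hnone
          · intro u hu
            rw [restrictLe, hlj, hrj] at hu
            simp only [Option.some.injEq] at hu
            refine ⟨.node ul (.leaf (j+1)), ?_, ?_⟩
            · rw [restrictLe, hr1, hll, hlj]
            · rw [← hu]; exact Ins.top_r _
      · obtain ⟨ur', hur', hins⟩ := (ihr hndr h).2 ur hrj
        rcases hlj : l.restrictLe j with _ | ul
        · constructor
          · intro hnone; rw [restrictLe, hlj, hrj] at hnone; simp at hnone
          · intro u hu
            rw [restrictLe, hlj, hrj] at hu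
            simp only [Option.some.injEq] at hu
            exact ⟨ur', by rw [restrictLe, hur', hll, hlj], by rw [← hu]; exact hins⟩
        · constructor
          · intro hnone; rw [restrictLe, hlj, hrj] at hnone; simp at hnone
          · intro u hu
            rw [restrictLe, hlj, hrj] at hu
            simp only [Option.some.injEq] at hu
            exact ⟨.node ul ur', by rw [restrictLe, hur', hll, hlj],
              by rw [← hu]; exact Ins.right _ hins⟩

end BTree
namespace BTree

lemma lca_exists {t : BTree} {S : Finset ℕ} (hS : S.Nonempty) (hsub : S ⊆ t.leafSet) :
    ∃ u, t.subtreeAt (t.lcaPos S) = some u ∧ S ⊆ u.leafSet := by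
  induction t with
  | leaf x => exact ⟨.leaf x, by simp [lcaPos, subtreeAt], hsub⟩
  | node l r ihl ihr =>
    by_cases hl : S ⊆ l.leafSet
    · obtain ⟨u, hu, hu2⟩ := ihl hl
      exact ⟨u, by simpa [lcaPos, hl, subtreeAt] using hu, hu2⟩
    · by_cases hr : S ⊆ r.leafSet
      · obtain ⟨u, hu, hu2⟩ := ihr hr
        exact ⟨u, by simpa [lcaPos, hl, hr, subtreeAt] using hu, hu2⟩
      · exact ⟨.node l r, by simp [lcaPos, hl, hr, subtreeAt], hsub⟩

lemma lca_singleton {t : BTree} {x : ℕ} (hnd : t.leafList.Nodup) (hx : x ∈ t.leafList) :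
    t.subtreeAt (t.lcaPos {x}) = some (.leaf x) := by
  induction t with
  | leaf y =>
    simp only [leafList, List.mem_singleton] at hx
    subst hx; simp [lcaPos, subtreeAt]
  | node l r ihl ihr =>
    obtain ⟨hndl, hndr, hdisj⟩ := nodup_node hnd
    simp only [leafList, List.mem_append] at hx
    rcases hx with hx | hx
    · have h1 : ({x} : Finset ℕ) ⊆ l.leafSet := by
        simp [Finset.singleton_subset_iff, mem_leafSet, hx]
      simpa [lcaPos, h1, subtreeAt] using ihl hndl hx
    · have h1 : ¬ ({x} : Finset ℕ) ⊆ l.leafSet := by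
        simp only [Finset.singleton_subset_iff, mem_leafSet]
        exact fun hc => hdisj _ hc hx
      have h2 : ({x} : Finset ℕ) ⊆ r.leafSet := by
        simp [Finset.singleton_subset_iff, mem_leafSet, hx]
      simpa [lcaPos, h1, h2, subtreeAt] using ihr hndr hx

lemma siblingIdx_none {t : BTree} {x : ℕ} (hx : x ∉ t.leafList) :
    t.siblingIdx x = none := by
  induction t with
  | leaf y => simp [siblingIdx]
  | node l r ihl ihr =>
    simp only [leafList, List.mem_append, not_or] at hx
    have hl : l ≠ .leaf x := by
      intro h; subst h; exact hx.1 (by simp [leafList])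
    have hr : r ≠ .leaf x := by
      intro h; subst h; exact hx.2 (by simp [leafList])
    simp [siblingIdx, hl, hr, ihl hx.1, ihr hx.2, Option.orElse]

lemma siblingIdx_of_sib {t w : BTree} {x : ℕ} (hnd : t.leafList.Nodup)
    (h : t.IsNode (.node w (.leaf x)) ∨ t.IsNode (.node (.leaf x) w)) :
    t.siblingIdx x = some w.idx := by
  induction t with
  | leaf y =>
    exfalso
    rcases h with ⟨p, hp⟩ | ⟨p, hp⟩ <;> cases p <;> simp [subtreeAt] at hp
  | node l r ihl ihr =>
    obtain ⟨hndl, hndr, hdisj⟩ := nodup_node hnd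
    have hxmem : x ∈ (BTree.node l r).leafList := by
      rcases h with h | h
      · exact h.leaf_sub x (by simp [leafList])
      · exact h.leaf_sub x (by simp [leafList])
    rcases h with h | h
    · rcases isNode_node_iff.1 h with heq | h | h
      · -- node l r = node w (leaf x) : l = w, r = leaf x
        injection heq with h1 h2
        subst h1; subst h2
        have hlx : w ≠ .leaf x := by
          intro hc; subst hc; simp [leafList] at hnd
        simp [siblingIdx, hlx]
      · -- inside l
        have hxl : x ∈ l.leafList := h.leaf_sub x (by simp [leafList])
        have hlx : l ≠ .leaf x := by
          rintro rfl
          obtain ⟨p, hp⟩ := h; cases p <;> simp [subtreeAt] at hp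
        by_cases hrx : r = .leaf x
        · exfalso; subst hrx; exact hdisj _ hxl (by simp [leafList])
        · simp [siblingIdx, hlx, hrx, ihl hndl (Or.inl h), Option.orElse]
      · -- inside r
        have hxr : x ∈ r.leafList := h.leaf_sub x (by simp [leafList])
        have hlx : l ≠ .leaf x := by
          rintro rfl
          exact hdisj x (by simp [leafList]) hxr
        have hrx : r ≠ .leaf x := by
          rintro rfl
          obtain ⟨p, hp⟩ := h; cases p <;> simp [subtreeAt] at hp
        have hxl : x ∉ l.leafList := fun hc => hdisj _ hc hxr
        simp [siblingIdx, hlx, hrx, siblingIdx_none hxl, ihr hndr (Or.inl h), Option.orElse]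
    · rcases isNode_node_iff.1 h with heq | h | h
      · injection heq with h1 h2
        subst h1; subst h2
        simp [siblingIdx]
      · have hxl : x ∈ l.leafList := h.leaf_sub x (by simp [leafList])
        have hlx : l ≠ .leaf x := by
          rintro rfl
          obtain ⟨p, hp⟩ := h; cases p <;> simp [subtreeAt] at hp
        by_cases hrx : r = .leaf x
        · exfalso; subst hrx; exact hdisj _ hxl (by simp [leafList])
        · simp [siblingIdx, hlx, hrx, ihl hndl (Or.inr h), Option.orElse]
      · have hxr : x ∈ r.leafList := h.leaf_sub x (by simp [leafList])
        have hlx : l ≠ .leaf x := by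
          rintro rfl
          exact hdisj x (by simp [leafList]) hxr
        have hrx : r ≠ .leaf x := by
          rintro rfl
          obtain ⟨p, hp⟩ := h; cases p <;> simp [subtreeAt] at hp
        have hxl : x ∉ l.leafList := fun hc => hdisj _ hc hxr
        simp [siblingIdx, hlx, hrx, siblingIdx_none hxl, ihr hndr (Or.inr h), Option.orElse]

end BTree
namespace BTree

lemma Ins.leafSet_eq {x : ℕ} {t t' : BTree} (h : Ins x t t') :
    t'.leafSet = insert x t.leafSet := by
  ext y; simp [mem_leafSet, h.mem_leafList y]

lemma Ins.subset_iff {x : ℕ} {t t' : BTree} (h : Ins x t t') {S : Finset ℕ}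
    (hxS : x ∉ S) : S ⊆ t'.leafSet ↔ S ⊆ t.leafSet := by
  rw [h.leafSet_eq]
  constructor
  · intro hs y hy
    rcases Finset.mem_insert.1 (hs hy) with rfl | hm
    · exact absurd hy hxS
    · exact hm
  · intro hs y hy; exact Finset.mem_insert_of_mem (hs hy)

lemma ins_lca {x : ℕ} {u u' : BTree} (hins : Ins x u u') :
    ∀ (S : Finset ℕ), S.Nonempty → S ⊆ u.leafSet → x ∉ u.leafList →
    ∀ r₀ r₁ : BTree, u.subtreeAt (u.lcaPos S) = some r₀ →
      u'.subtreeAt (u'.lcaPos S) = some r₁ →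
    ∀ y ∈ r₁.leafList, y = x ∨ y ∈ r₀.leafList := by
  induction hins with
  | top_r t =>
    intro S hS hsub hx r₀ r₁ hr₀ hr₁
    rw [lcaPos, if_pos hsub] at hr₁
    simp only [subtreeAt] at hr₁
    rw [hr₀] at hr₁
    injection hr₁ with h; subst h
    exact fun y hy => Or.inr hy
  | top_l t =>
    intro S hS hsub hx r₀ r₁ hr₀ hr₁
    have hxS : x ∉ S := fun hc => hx (mem_leafSet.1 (hsub hc))
    have c1 : ¬ S ⊆ (BTree.leaf x).leafSet := by
      obtain ⟨s, hs⟩ := hS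
      intro hc
      have := hc hs
      simp [leafSet, leafList] at this
      exact hxS (this ▸ hs)
    rw [lcaPos, if_neg c1, if_pos hsub] at hr₁
    simp only [subtreeAt] at hr₁
    rw [hr₀] at hr₁
    injection hr₁ with h; subst h
    exact fun y hy => Or.inr hy
  | left r hi ih =>
    rename_i l l'
    intro S hS hsub hx r₀ r₁ hr₀ hr₁
    have hxS : x ∉ S := fun hc => hx (mem_leafSet.1 (hsub hc))
    have hxl : x ∉ l.leafList := fun hc => hx (by simp [leafList, hc])
    by_cases hSl : S ⊆ l.leafSet
    · have hSl' : S ⊆ l'.leafSet := (hi.subset_iff hxS).2 hSl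
      rw [lcaPos, if_pos hSl] at hr₀
      simp only [subtreeAt] at hr₀
      rw [lcaPos, if_pos hSl'] at hr₁
      simp only [subtreeAt] at hr₁
      exact ih S hS hSl hxl r₀ r₁ hr₀ hr₁
    · have hSl' : ¬ S ⊆ l'.leafSet := fun hc => hSl ((hi.subset_iff hxS).1 hc)
      by_cases hSr : S ⊆ r.leafSet
      · rw [lcaPos, if_neg hSl, if_pos hSr] at hr₀
        simp only [subtreeAt] at hr₀
        rw [lcaPos, if_neg hSl', if_pos hSr] at hr₁
        simp only [subtreeAt] at hr₁
        rw [hr₀] at hr₁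
        injection hr₁ with h; subst h
        exact fun y hy => Or.inr hy
      · rw [lcaPos, if_neg hSl, if_neg hSr] at hr₀
        simp only [subtreeAt] at hr₀
        rw [lcaPos, if_neg hSl', if_neg hSr] at hr₁
        simp only [subtreeAt] at hr₁
        injection hr₀ with h₀; injection hr₁ with h₁
        subst h₀; subst h₁
        intro y hy
        simp only [leafList, List.mem_append] at hy ⊢
        rcases hy with hy | hy
        · rcases (hi.mem_leafList y).1 hy with rfl | hy
          · exact Or.inl rfl
          · exact Or.inr (Or.inl hy)
        · exact Or.inr (Or.inr hy)
  | right l hi ih =>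
    rename_i r r'
    intro S hS hsub hx r₀ r₁ hr₀ hr₁
    have hxS : x ∉ S := fun hc => hx (mem_leafSet.1 (hsub hc))
    have hxr : x ∉ r.leafList := fun hc => hx (by simp [leafList, hc])
    by_cases hSl : S ⊆ l.leafSet
    · rw [lcaPos, if_pos hSl] at hr₀
      simp only [subtreeAt] at hr₀
      rw [lcaPos, if_pos hSl] at hr₁
      simp only [subtreeAt] at hr₁
      rw [hr₀] at hr₁
      injection hr₁ with h; subst h
      exact fun y hy => Or.inr hy
    · by_cases hSr : S ⊆ r.leafSet
      · have hSr' : S ⊆ r'.leafSet := (hi.subset_iff hxS).2 hSr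
        rw [lcaPos, if_neg hSl, if_pos hSr] at hr₀
        simp only [subtreeAt] at hr₀
        rw [lcaPos, if_neg hSl, if_pos hSr'] at hr₁
        simp only [subtreeAt] at hr₁
        exact ih S hS hSr hxr r₀ r₁ hr₀ hr₁
      · have hSr' : ¬ S ⊆ r'.leafSet := fun hc => hSr ((hi.subset_iff hxS).1 hc)
        rw [lcaPos, if_neg hSl, if_neg hSr] at hr₀
        simp only [subtreeAt] at hr₀
        rw [lcaPos, if_neg hSl, if_neg hSr'] at hr₁
        simp only [subtreeAt] at hr₁
        injection hr₀ with h₀; injection hr₁ with h₁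
        subst h₀; subst h₁
        intro y hy
        simp only [leafList, List.mem_append] at hy ⊢
        rcases hy with hy | hy
        · exact Or.inr (Or.inl hy)
        · rcases (hi.mem_leafList y).1 hy with rfl | hy
          · exact Or.inl rfl
          · exact Or.inr (Or.inr hy)

end BTree
namespace BTree

lemma subtreeAt_isNode {t c : BTree} {p : List Bool} (h : t.subtreeAt p = some c) :
    t.IsNode c := ⟨p, h⟩

lemma key_base {m : ℕ} {t : BTree} (hnd : t.leafList.Nodup)
    (S : Finset ℕ) (hmS : m ∈ S) (HS : ∀ s ∈ S, m ≤ s)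
    (HW1 : ∃ s ∈ S, s ∈ t.leafList)
    (HW2 : ∀ wl wr, t = BTree.node wl wr →
      max wl.minLeaf wr.minLeaf ∈ S ∧ m < max wl.minLeaf wr.minLeaf)
    {r₀ : BTree} (hr₀ : t.subtreeAt (t.lcaPos S) = some r₀) (hSr₀ : S ⊆ r₀.leafSet)
    (HC : ∀ y ∈ r₀.leafList, m ≤ y) :
    ∀ y ∈ t.leafList, m ≤ y := by
  cases t with
  | leaf z =>
    obtain ⟨s, hs, hsz⟩ := HW1
    simp only [leafList, List.mem_singleton] at hsz ⊢
    intro y hy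
    subst hy; subst hsz
    exact HS s hs
  | node wl wr =>
    obtain ⟨hb, hmb⟩ := HW2 wl wr rfl
    obtain ⟨hndl, hndr, hdisj⟩ := nodup_node hnd
    by_cases h1 : S ⊆ wl.leafSet
    · exfalso
      rw [lcaPos, if_pos h1] at hr₀
      simp only [subtreeAt] at hr₀
      have hsubl : ∀ y ∈ r₀.leafList, y ∈ wl.leafList := (subtreeAt_isNode hr₀).leaf_sub
      have hm1 : m ∈ wl.leafList := hsubl m (mem_leafSet.1 (hSr₀ hmS))
      have hminl : wl.minLeaf ≤ m := minLeaf_le hm1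
      have hbr : max wl.minLeaf wr.minLeaf = wr.minLeaf := by
        rcases max_choice wl.minLeaf wr.minLeaf with h | h <;> omega
      have hbwr : max wl.minLeaf wr.minLeaf ∈ wr.leafList := by rw [hbr]; exact minLeaf_mem wr
      have hbwl : max wl.minLeaf wr.minLeaf ∈ wl.leafList :=
        hsubl _ (mem_leafSet.1 (hSr₀ hb))
      exact hdisj _ hbwl hbwr
    · by_cases h2 : S ⊆ wr.leafSet
      · exfalso
        rw [lcaPos, if_neg h1, if_pos h2] at hr₀
        simp only [subtreeAt] at hr₀
        have hsubr : ∀ y ∈ r₀.leafList, y ∈ wr.leafList := (subtreeAt_isNode hr₀).leaf_sub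
        have hm1 : m ∈ wr.leafList := hsubr m (mem_leafSet.1 (hSr₀ hmS))
        have hminr : wr.minLeaf ≤ m := minLeaf_le hm1
        have hbl : max wl.minLeaf wr.minLeaf = wl.minLeaf := by
          rcases max_choice wl.minLeaf wr.minLeaf with h | h <;> omega
        have hbwl : max wl.minLeaf wr.minLeaf ∈ wl.leafList := by rw [hbl]; exact minLeaf_mem wl
        have hbwr : max wl.minLeaf wr.minLeaf ∈ wr.leafList :=
          hsubr _ (mem_leafSet.1 (hSr₀ hb))
        exact hdisj _ hbwl hbwr
      · rw [lcaPos, if_neg h1, if_neg h2] at hr₀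
        simp only [subtreeAt] at hr₀
        injection hr₀ with h; subst h
        exact HC

lemma key {m x : ℕ} {u u' : BTree} (hins : Ins x u u') :
    ∀ (S : Finset ℕ), S ⊆ u.leafSet → x ∉ u.leafList → u'.leafList.Nodup →
    m ∈ S → (∀ s ∈ S, m ≤ s) → m ≤ x →
    (∀ w : BTree, (u'.IsNode (.node w (.leaf x)) ∨ u'.IsNode (.node (.leaf x) w)) →
        (∃ s ∈ S, s ∈ w.leafList) ∧
        ∀ wl wr, w = BTree.node wl wr →
          max wl.minLeaf wr.minLeaf ∈ S ∧ m < max wl.minLeaf wr.minLeaf) →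
    ∀ r₀ : BTree, u.subtreeAt (u.lcaPos S) = some r₀ → S ⊆ r₀.leafSet →
    (∀ y ∈ r₀.leafList, m ≤ y) →
    ∀ r₁ : BTree, u'.subtreeAt (u'.lcaPos (insert x S)) = some r₁ →
    ∀ y ∈ r₁.leafList, m ≤ y := by
  induction hins with
  | top_r t =>
    intro S hsub hx hnd' hmS HS hmx HW r₀ hr₀ hSr₀ HC r₁ hr₁
    have hmneqx : m ≠ x := fun hc => hx (hc ▸ mem_leafSet.1 (hsub hmS))
    have c1 : ¬ insert x S ⊆ t.leafSet := fun hc =>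
      hx (mem_leafSet.1 (hc (Finset.mem_insert_self x S)))
    have c2 : ¬ insert x S ⊆ (BTree.leaf x).leafSet := by
      intro hc
      have := hc (Finset.mem_insert_of_mem hmS)
      simp [leafSet, leafList] at this
      exact hmneqx this
    rw [lcaPos, if_neg c1, if_neg c2] at hr₁
    simp only [subtreeAt] at hr₁
    injection hr₁ with h; subst h
    have hndt : t.leafList.Nodup := (nodup_node hnd').1
    have hbase := key_base hndt S hmS HS
      ((HW t (Or.inl (isNode_self _))).1) ((HW t (Or.inl (isNode_self _))).2) hr₀ hSr₀ HC
    intro y hy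
    simp only [leafList, List.mem_append, List.mem_singleton] at hy
    rcases hy with hy | rfl
    · exact hbase y hy
    · exact hmx
  | top_l t =>
    intro S hsub hx hnd' hmS HS hmx HW r₀ hr₀ hSr₀ HC r₁ hr₁
    have hmneqx : m ≠ x := fun hc => hx (hc ▸ mem_leafSet.1 (hsub hmS))
    have c1 : ¬ insert x S ⊆ (BTree.leaf x).leafSet := by
      intro hc
      have := hc (Finset.mem_insert_of_mem hmS)
      simp [leafSet, leafList] at this
      exact hmneqx this
    have c2 : ¬ insert x S ⊆ t.leafSet := fun hc =>
      hx (mem_leafSet.1 (hc (Finset.mem_insert_self x S)))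
    rw [lcaPos, if_neg c1, if_neg c2] at hr₁
    simp only [subtreeAt] at hr₁
    injection hr₁ with h; subst h
    have hndt : t.leafList.Nodup := (nodup_node hnd').2.1
    have hbase := key_base hndt S hmS HS
      ((HW t (Or.inr (isNode_self _))).1) ((HW t (Or.inr (isNode_self _))).2) hr₀ hSr₀ HC
    intro y hy
    simp only [leafList, List.mem_append, List.mem_singleton] at hy
    rcases hy with rfl | hy
    · exact hmx
    · exact hbase y hy
  | left r hi ih =>
    rename_i l l'
    intro S hsub hx hnd' hmS HS hmx HW r₀ hr₀ hSr₀ HC r₁ hr₁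
    have hxS : x ∉ S := fun hc => hx (mem_leafSet.1 (hsub hc))
    have hxl : x ∉ l.leafList := fun hc => hx (by simp [leafList, hc])
    have hxr : x ∉ r.leafList := fun hc => hx (by simp [leafList, hc])
    obtain ⟨hndl', hndr, hdisj'⟩ := nodup_node hnd'
    have hndu : (BTree.node l r).leafList.Nodup :=
      (Ins.sublist (Ins.left r hi)).nodup hnd'
    obtain ⟨hndl, _, hdisj⟩ := nodup_node hndu
    have HW' : ∀ w : BTree, (l'.IsNode (.node w (.leaf x)) ∨ l'.IsNode (.node (.leaf x) w)) →
        (∃ s ∈ S, s ∈ w.leafList) ∧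
        ∀ wl wr, w = BTree.node wl wr →
          max wl.minLeaf wr.minLeaf ∈ S ∧ m < max wl.minLeaf wr.minLeaf := by
      intro w hw
      apply HW
      rcases hw with hw | hw
      · exact Or.inl (isNode_node_iff.2 (Or.inr (Or.inl hw)))
      · exact Or.inr (isNode_node_iff.2 (Or.inr (Or.inl hw)))
    by_cases hSl : S ⊆ l.leafSet
    · have hSl' : insert x S ⊆ l'.leafSet := by
        rw [hi.leafSet_eq]
        intro y hy
        rcases Finset.mem_insert.1 hy with rfl | hy
        · exact Finset.mem_insert_self _ _
        · exact Finset.mem_insert_of_mem (hSl hy)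
      rw [lcaPos, if_pos hSl] at hr₀
      simp only [subtreeAt] at hr₀
      rw [lcaPos, if_pos hSl'] at hr₁
      simp only [subtreeAt] at hr₁
      exact ih S hSl hxl hndl' hmS HS hmx HW' r₀ hr₀ hSr₀ HC r₁ hr₁
    · have hSl'' : ¬ insert x S ⊆ l'.leafSet := by
        intro hc
        exact hSl ((hi.subset_iff hxS).1 (fun y hy => hc (Finset.mem_insert_of_mem hy)))
      by_cases hSr : S ⊆ r.leafSet
      · exfalso
        obtain ⟨w, hw⟩ := hi.exists_sib
        obtain ⟨s, hsS, hsw⟩ := (HW' w hw).1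
        have hswl' : s ∈ l'.leafList := by
          rcases hw with hw | hw
          · exact hw.leaf_sub s (by simp [leafList, hsw])
          · exact hw.leaf_sub s (by simp [leafList, hsw])
        have hsneq : s ≠ x := fun hc => hxS (hc ▸ hsS)
        have hsl : s ∈ l.leafList := by
          rcases (hi.mem_leafList s).1 hswl' with rfl | h
          · exact absurd rfl hsneq
          · exact h
        exact hdisj s hsl (mem_leafSet.1 (hSr hsS))
      · have hSr' : ¬ insert x S ⊆ r.leafSet := fun hc =>
          hxr (mem_leafSet.1 (hc (Finset.mem_insert_self x S)))
        rw [lcaPos, if_neg hSl, if_neg hSr] at hr₀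
        simp only [subtreeAt] at hr₀
        injection hr₀ with h; subst h
        rw [lcaPos, if_neg hSl'', if_neg hSr'] at hr₁
        simp only [subtreeAt] at hr₁
        injection hr₁ with h; subst h
        intro y hy
        simp only [leafList, List.mem_append] at hy
        rcases hy with hy | hy
        · rcases (hi.mem_leafList y).1 hy with rfl | hy
          · exact hmx
          · exact HC y (by simp [leafList, hy])
        · exact HC y (by simp [leafList, hy])
  | right l hi ih =>
    rename_i r r'
    intro S hsub hx hnd' hmS HS hmx HW r₀ hr₀ hSr₀ HC r₁ hr₁
    have hxS : x ∉ S := fun hc => hx (mem_leafSet.1 (hsub hc))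
    have hxl : x ∉ l.leafList := fun hc => hx (by simp [leafList, hc])
    have hxr : x ∉ r.leafList := fun hc => hx (by simp [leafList, hc])
    obtain ⟨hndl, hndr', hdisj'⟩ := nodup_node hnd'
    have hndu : (BTree.node l r).leafList.Nodup :=
      (Ins.sublist (Ins.right l hi)).nodup hnd'
    obtain ⟨_, hndr, hdisj⟩ := nodup_node hndu
    have HW' : ∀ w : BTree, (r'.IsNode (.node w (.leaf x)) ∨ r'.IsNode (.node (.leaf x) w)) →
        (∃ s ∈ S, s ∈ w.leafList) ∧
        ∀ wl wr, w = BTree.node wl wr →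
          max wl.minLeaf wr.minLeaf ∈ S ∧ m < max wl.minLeaf wr.minLeaf := by
      intro w hw
      apply HW
      rcases hw with hw | hw
      · exact Or.inl (isNode_node_iff.2 (Or.inr (Or.inr hw)))
      · exact Or.inr (isNode_node_iff.2 (Or.inr (Or.inr hw)))
    have c1 : ¬ insert x S ⊆ l.leafSet := fun hc =>
      hxl (mem_leafSet.1 (hc (Finset.mem_insert_self x S)))
    by_cases hSl : S ⊆ l.leafSet
    · exfalso
      obtain ⟨w, hw⟩ := hi.exists_sib
      obtain ⟨s, hsS, hsw⟩ := (HW' w hw).1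
      have hswr' : s ∈ r'.leafList := by
        rcases hw with hw | hw
        · exact hw.leaf_sub s (by simp [leafList, hsw])
        · exact hw.leaf_sub s (by simp [leafList, hsw])
      have hsneq : s ≠ x := fun hc => hxS (hc ▸ hsS)
      have hsr : s ∈ r.leafList := by
        rcases (hi.mem_leafList s).1 hswr' with rfl | h
        · exact absurd rfl hsneq
        · exact h
      exact hdisj s (mem_leafSet.1 (hSl hsS)) hsr
    · by_cases hSr : S ⊆ r.leafSet
      · have hSr' : insert x S ⊆ r'.leafSet := by
          rw [hi.leafSet_eq]
          intro y hy
          rcases Finset.mem_insert.1 hy with rfl | hy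
          · exact Finset.mem_insert_self _ _
          · exact Finset.mem_insert_of_mem (hSr hy)
        rw [lcaPos, if_neg hSl, if_pos hSr] at hr₀
        simp only [subtreeAt] at hr₀
        rw [lcaPos, if_neg c1, if_pos hSr'] at hr₁
        simp only [subtreeAt] at hr₁
        exact ih S hSr hxr hndr' hmS HS hmx HW' r₀ hr₀ hSr₀ HC r₁ hr₁
      · have hSr'' : ¬ insert x S ⊆ r'.leafSet := by
          intro hc
          exact hSr ((hi.subset_iff hxS).1 (fun y hy => hc (Finset.mem_insert_of_mem hy)))
        rw [lcaPos, if_neg hSl, if_neg hSr] at hr₀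
        simp only [subtreeAt] at hr₀
        injection hr₀ with h; subst h
        rw [lcaPos, if_neg c1, if_neg hSr''] at hr₁
        simp only [subtreeAt] at hr₁
        injection hr₁ with h; subst h
        intro y hy
        simp only [leafList, List.mem_append] at hy
        rcases hy with hy | hy
        · exact HC y (by simp [leafList, hy])
        · rcases (hi.mem_leafList y).1 hy with rfl | hy
          · exact hmx
          · exact HC y (by simp [leafList, hy])

end BTree
/-- In a strictly sorted list, the elements `≤` the `k`-th entry are the first `k+1`. -/
lemma sorted_filter_le_get : ∀ (l : List ℕ), l.Pairwise (· < ·) → ∀ k (hk : k < l.length),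
    l.filter (fun y => y ≤ l.get ⟨k, hk⟩) = l.take (k + 1)
  | [], _, k, hk => by simp at hk
  | a :: tl, hs, k, hk => by
    have hpair : ∀ b ∈ tl, a < b := fun b hb => (List.pairwise_cons.1 hs).1 b hb
    have hst : tl.Pairwise (· < ·) := (List.pairwise_cons.1 hs).2
    cases k with
    | zero =>
      simp only [List.get, List.filter_cons, List.take]
      have h1 : a ≤ a := le_refl a
      rw [if_pos (by simpa using h1)]
      have h2 : tl.filter (fun y => y ≤ a) = [] := by
        apply List.filter_eq_nil_iff.2
        intro b hb
        simpa using not_le.2 (hpair b hb)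
      simp [h2]
    | succ k =>
      have hk' : k < tl.length := by simpa using hk
      have hget : (a :: tl).get ⟨k+1, hk⟩ = tl.get ⟨k, hk'⟩ := rfl
      simp only [hget, List.filter_cons, List.take]
      have h1 : a ≤ tl.get ⟨k, hk'⟩ := le_of_lt (hpair _ (List.get_mem _ _))
      rw [if_pos (by simpa using h1), sorted_filter_le_get tl hst k hk']

lemma card_filter_le_sort_get (M : Finset ℕ) (k : ℕ) (hk : k < (M.sort (· ≤ ·)).length) :
    (M.filter (· ≤ (M.sort (· ≤ ·)).get ⟨k, hk⟩)).card = k + 1 := by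
  classical
  set l := M.sort (· ≤ ·) with hl
  have h1 : M.filter (· ≤ l.get ⟨k, hk⟩) = (l.filter (fun y => y ≤ l.get ⟨k, hk⟩)).toFinset := by
    ext y
    simp only [Finset.mem_filter, List.mem_toFinset, List.mem_filter, decide_eq_true_eq]
    constructor
    · rintro ⟨hy, h2⟩; exact ⟨(Finset.mem_sort _).2 hy, h2⟩
    · rintro ⟨hy, h2⟩; exact ⟨(Finset.mem_sort _).1 hy, h2⟩
  rw [h1, sorted_filter_le_get l (Finset.sortedLT_sort M).pairwise k hk]
  have hnd : (l.take (k+1)).Nodup := (Finset.sort_nodup M _).sublist (List.take_sublist _ _)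
  rw [List.card_toFinset, hnd.dedup]
  simp [List.length_take]
  omega
section MismatchLemmas

variable {ι : Type*} (V : ι → ℕ → ℤ)

lemma mismatch_succ (i : ℕ) :
    mismatch V (i+1) =
      if (∃ a b : ι, V a (i+1) ≠ V b (i+1)) ∨
          (∃ j ∈ mismatch V i, ∀ a : ι, V a (i+1) = -(j : ℤ))
      then insert (i+1) (mismatch V i) else mismatch V i := by
  rw [mismatch]

lemma mismatch_mem_le {x i : ℕ} (h : x ∈ mismatch V i) : 1 ≤ x ∧ x ≤ i := by
  induction i with
  | zero => rw [mismatch] at h; simp at h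
  | succ i ih =>
    rw [mismatch_succ] at h
    split at h
    · rcases Finset.mem_insert.1 h with rfl | h
      · omega
      · have := ih h; omega
    · have := ih h; omega

lemma mismatch_subset_succ (i : ℕ) : mismatch V i ⊆ mismatch V (i+1) := by
  rw [mismatch_succ]
  split
  · exact Finset.subset_insert _ _
  · exact Finset.Subset.refl _

lemma mismatch_subset {i i' : ℕ} (h : i ≤ i') : mismatch V i ⊆ mismatch V i' := by
  induction i' with
  | zero => have : i = 0 := by omega
            subst this; exact Finset.Subset.refl _
  | succ i' ih =>
    rcases Nat.lt_or_ge i (i'+1) with h' | h'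
    · exact (ih (by omega)).trans (mismatch_subset_succ V i')
    · have : i = i' + 1 := by omega
      subst this; exact Finset.Subset.refl _

lemma mismatch_mem_restrict {x i i' : ℕ} (h : x ∈ mismatch V i') (hx : x ≤ i) (hii : i ≤ i') :
    x ∈ mismatch V i := by
  induction i' with
  | zero => rw [mismatch] at h; simp at h
  | succ i' ih =>
    rcases Nat.lt_or_ge i (i'+1) with h' | h'
    · apply ih _ (by omega)
      rw [mismatch_succ] at h
      split at h
      · rcases Finset.mem_insert.1 h with rfl | h
        · omega
        · exact h
      · exact h
    · have : i = i' + 1 := by omega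
      subst this; exact h

/-- At a non-mismatched position all the OLA vectors agree. -/
lemma mismatch_agree {x i : ℕ} (hx1 : 1 ≤ x) (hxi : x ≤ i) (h : x ∉ mismatch V i) :
    ∀ a b : ι, V a x = V b x := by
  intro a b
  by_contra hne
  apply h
  apply mismatch_subset V hxi
  obtain ⟨x', rfl⟩ : ∃ x', x = x' + 1 := ⟨x - 1, by omega⟩
  apply mismatch_subset V (le_refl _)
  rw [mismatch_succ]
  rw [if_pos (Or.inl ⟨a, b, hne⟩)]
  exact Finset.mem_insert_self _ _

/-- A non-mismatched position does not attach to a mismatched node. -/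
lemma mismatch_no_neg {x i j : ℕ} (hx1 : 1 ≤ x) (hxi : x ≤ i) (h : x ∉ mismatch V i)
    (hj : j ∈ mismatch V i) (hjx : j < x) : ¬ ∀ a : ι, V a x = -(j : ℤ) := by
  intro hall
  apply h
  apply mismatch_subset V hxi
  obtain ⟨x', rfl⟩ : ∃ x', x = x' + 1 := ⟨x - 1, by omega⟩
  rw [mismatch_succ]
  have hj' : j ∈ mismatch V x' := mismatch_mem_restrict V hj (by omega) (by omega)
  rw [if_pos (Or.inr ⟨j, hj', hall⟩)]
  exact Finset.mem_insert_self _ _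

end MismatchLemmas

section BelongsLemmas

variable (M : Finset ℕ) (v : ℕ → ℤ)

lemma belongs_eq (j : ℕ) :
    belongs M v j = if j ∈ M then (M.filter (· ≤ j)).card
      else if _ : (v j).natAbs < j then belongs M v (v j).natAbs else 0 := by
  rw [belongs]

lemma mVal_mem {i : ℕ} (hi1 : 1 ≤ i) (hi2 : i ≤ M.card) : mVal M i ∈ M := by
  rw [mVal, if_neg (by omega)]
  have hlen : i - 1 < (M.sort (· ≤ ·)).length := by
    rw [Finset.length_sort]; omega
  rw [List.getD_eq_getElem _ _ hlen]
  exact (Finset.mem_sort _).1 (List.getElem_mem _)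

lemma belongs_mVal {i : ℕ} (hi1 : 1 ≤ i) (hi2 : i ≤ M.card) :
    belongs M v (mVal M i) = i := by
  have hm : mVal M i ∈ M := mVal_mem M hi1 hi2
  rw [belongs_eq, if_pos hm]
  have hlen : i - 1 < (M.sort (· ≤ ·)).length := by
    rw [Finset.length_sort]; omega
  have : mVal M i = (M.sort (· ≤ ·)).get ⟨i-1, hlen⟩ := by
    rw [mVal, if_neg (by omega), List.getD_eq_getElem _ _ hlen]; rfl
  rw [this, card_filter_le_sort_get M (i-1) hlen]
  omega

lemma belongs_mem_uniq {i j : ℕ} (hj : j ∈ M) (h : belongs M v j = i) : j = mVal M i := by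
  obtain ⟨k, hk, hkj⟩ : ∃ k, ∃ hk : k < (M.sort (· ≤ ·)).length,
      (M.sort (· ≤ ·)).get ⟨k, hk⟩ = j := by
    obtain ⟨⟨k, hk⟩, hkj⟩ := List.get_of_mem ((Finset.mem_sort (α := ℕ) (· ≤ ·)).2 hj)
    exact ⟨k, hk, hkj⟩
  rw [belongs_eq, if_pos hj] at h
  rw [← hkj] at h ⊢
  rw [card_filter_le_sort_get M k hk] at h
  rw [mVal, if_neg (by omega)]
  have : i - 1 = k := by omega
  rw [this, List.getD_eq_getElem _ _ hk]
  rfl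

lemma belongs_ge {i : ℕ} (hi : i ≠ 0) : ∀ j, belongs M v j = i → mVal M i ≤ j := by
  intro j
  induction j using Nat.strong_induction_on with
  | _ j ih =>
    intro h
    by_cases hj : j ∈ M
    · rw [belongs_mem_uniq M v hj h]
    · rw [belongs_eq, if_neg hj] at h
      split at h
      · have := ih _ (by assumption) h
        omega
      · exact absurd h.symm hi

lemma belongs_step {i j : ℕ} (hi : i ≠ 0) (hj : j ∉ M) (h : belongs M v j = i) :
    (v j).natAbs < j ∧ belongs M v (v j).natAbs = i := by
  rw [belongs_eq, if_neg hj] at h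
  split at h
  · exact ⟨by assumption, h⟩
  · exact absurd h.symm hi

lemma mVal_strict_mono (hM : ∀ x ∈ M, 1 ≤ x) {i j : ℕ} (hij : i < j) (hj : j ≤ M.card) :
    mVal M i < mVal M j := by
  have hj1 : 1 ≤ j := by omega
  have hmem : mVal M j ∈ M := mVal_mem M hj1 hj
  have hlenj : j - 1 < (M.sort (· ≤ ·)).length := by rw [Finset.length_sort]; omega
  rcases Nat.eq_zero_or_pos i with rfl | hi1
  · rw [mVal, if_pos rfl]
    exact lt_of_lt_of_le Nat.zero_lt_one (hM _ hmem)
  · have hleni : i - 1 < (M.sort (· ≤ ·)).length := by rw [Finset.length_sort]; omega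
    rw [mVal, if_neg (by omega), mVal, if_neg (by omega),
      List.getD_eq_getElem _ _ hleni, List.getD_eq_getElem _ _ hlenj]
    have := (Finset.sortedLT_sort M).pairwise.rel_get_of_lt
      (a := ⟨i-1, hleni⟩) (b := ⟨j-1, hlenj⟩) (by simp [Fin.mk_lt_mk]; omega)
    simpa using this

end BelongsLemmas
lemma relabel_leafList (f : ℕ → ℕ) : ∀ t : BTree, (t.relabel f).leafList = t.leafList.map f
  | .leaf x => rfl
  | .node l r => by
    simp [BTree.relabel, BTree.leafList, relabel_leafList f l, relabel_leafList f r]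

lemma relabel_phylo {t : BTree} {n : ℕ} (ht : t.IsPhylo n) {σ : Equiv.Perm ℕ}
    (hσ : IsOrdering σ n) : (t.relabel σ).IsPhylo n := by
  obtain ⟨hnd, hset⟩ := ht
  constructor
  · rw [relabel_leafList]
    exact hnd.map σ.injective
  · have himg : Finset.image σ (Finset.range n) = Finset.range n := by
      apply Finset.eq_of_subset_of_card_le
      · intro y hy
        obtain ⟨x, hx, rfl⟩ := Finset.mem_image.1 hy
        exact Finset.mem_range.2 (hσ x (Finset.mem_range.1 hx))
      · rw [Finset.card_image_of_injective _ σ.injective]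
    have h2 : (t.relabel σ).leafSet = Finset.image σ t.leafSet := by
      rw [BTree.leafSet, relabel_leafList, BTree.leafSet]
      ext y
      simp [List.mem_map]
    rw [h2, hset, himg]

lemma phylo_n_pos {t : BTree} {n : ℕ} (ht : t.IsPhylo n) : 1 ≤ n := by
  have h1 : t.minLeaf ∈ t.leafSet := BTree.mem_leafSet.2 (BTree.minLeaf_mem t)
  rw [ht.2, Finset.mem_range] at h1
  omega

lemma main_induction {ι : Type} [Fintype ι] [Nonempty ι] {n : ℕ}
    (ts : ι → BTree) (hts : ∀ a, (ts a).IsPhylo n)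
    (σ : Equiv.Perm ℕ) (hσ : IsOrdering σ n) (a₀ : ι) {i : ℕ} (hi1 : 1 ≤ i)
    (hi2 : i ≤ (mismatch (fun a => ola (ts a) σ) (n - 1)).card) (a : ι) :
    ∀ j, mVal (mismatch (fun a => ola (ts a) σ) (n - 1)) i ≤ j → j ≤ n - 1 →
    ∃ u, ((ts a).relabel σ).restrictLe j = some u ∧
      ∀ r₀ : BTree, u.subtreeAt (u.lcaPos
          (((Finset.range n).filter (fun k => belongs
            (mismatch (fun a => ola (ts a) σ) (n - 1)) (fun k => ola (ts a₀) σ k) k = i)).filter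
            (· ≤ j))) = some r₀ →
        ∀ y ∈ r₀.leafList, mVal (mismatch (fun a => ola (ts a) σ) (n - 1)) i ≤ y := by
  set V : ι → ℕ → ℤ := fun a => ola (ts a) σ with hV
  set M : Finset ℕ := mismatch V (n - 1) with hM
  set v : ℕ → ℤ := fun k => ola (ts a₀) σ k with hv
  set S : Finset ℕ := (Finset.range n).filter (fun k => belongs M v k = i) with hS
  set m : ℕ := mVal M i with hm
  have hn : 1 ≤ n := phylo_n_pos (hts a₀)
  have hmM : m ∈ M := mVal_mem M hi1 hi2
  have hmle : 1 ≤ m ∧ m ≤ n - 1 := mismatch_mem_le V hmM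
  have hmn : m < n := by omega
  -- the relabeled tree
  set T : BTree := (ts a).relabel σ with hT
  have hTphy : T.IsPhylo n := relabel_phylo (hts a) hσ
  have hTnd : T.leafList.Nodup := hTphy.1
  have hTmem : ∀ y, y ∈ T.leafList ↔ y < n := by
    intro y
    rw [← BTree.mem_leafSet, hTphy.2, Finset.mem_range]
  have hSm : ∀ s ∈ S, m ≤ s := by
    intro s hs
    rw [hS, Finset.mem_filter] at hs
    exact belongs_ge M v (by omega) s hs.2
  have hmS : m ∈ S := by
    rw [hS, Finset.mem_filter, Finset.mem_range]
    exact ⟨hmn, belongs_mVal M v hi1 hi2⟩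
  intro j hj
  induction j, hj using Nat.le_induction with
  | base =>
    intro hjn
    have hmT : m ∈ T.leafList := (hTmem m).2 hmn
    obtain ⟨u, hu⟩ := BTree.restrictLe_some_of_mem hmT (le_refl m)
    refine ⟨u, hu, ?_⟩
    have huleaf : u.leafList = T.leafList.filter (· ≤ m) :=
      (BTree.restrictLe_leafList T m).1 u hu
    have hund : u.leafList.Nodup := huleaf ▸ hTnd.filter _
    have hmu : m ∈ u.leafList := by
      rw [huleaf, List.mem_filter]
      exact ⟨hmT, by simp⟩
    have hSfilter : S.filter (· ≤ m) = {m} := by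
      ext y
      simp only [Finset.mem_filter, Finset.mem_singleton]
      constructor
      · rintro ⟨hy, hy2⟩
        have := hSm y hy
        omega
      · rintro rfl
        exact ⟨hmS, le_refl m⟩
    rw [hSfilter]
    intro r₀ hr₀
    rw [BTree.lca_singleton hund hmu] at hr₀
    injection hr₀ with h
    subst h
    simp only [BTree.leafList, List.mem_singleton]
    rintro y rfl
    exact le_refl m
  | succ j hj ih =>
    intro hjn
    obtain ⟨u, hu, HC'⟩ := ih (by omega)
    have hj1T : (j+1) ∈ T.leafList := (hTmem _).2 (by omega)
    obtain ⟨u', hu', hins⟩ := (BTree.restrictLe_succ_mem hTnd hj1T).2 u hu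
    have huleaf : u.leafList = T.leafList.filter (· ≤ j) :=
      (BTree.restrictLe_leafList T j).1 u hu
    have hu'leaf : u'.leafList = T.leafList.filter (· ≤ (j+1)) :=
      (BTree.restrictLe_leafList T (j+1)).1 u' hu'
    have hund : u.leafList.Nodup := huleaf ▸ hTnd.filter _
    have hu'nd : u'.leafList.Nodup := hu'leaf ▸ hTnd.filter _
    have hj1u : (j+1) ∉ u.leafList := by
      rw [huleaf, List.mem_filter]
      simp
    have hSj_sub : S.filter (· ≤ j) ⊆ u.leafSet := by
      intro y hy
      rw [Finset.mem_filter] at hy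
      rw [BTree.mem_leafSet, huleaf, List.mem_filter]
      have hyn : y < n := by
        have := hy.1
        rw [hS, Finset.mem_filter, Finset.mem_range] at this
        exact this.1
      exact ⟨(hTmem y).2 hyn, by simpa using hy.2⟩
    have hmSj : m ∈ S.filter (· ≤ j) := Finset.mem_filter.2 ⟨hmS, by simpa using hj⟩
    -- the lca subtree at level j
    obtain ⟨r₀, hr₀, hSr₀⟩ := BTree.lca_exists ⟨m, hmSj⟩ hSj_sub
    have HC : ∀ y ∈ r₀.leafList, m ≤ y := HC' r₀ hr₀
    refine ⟨u', hu', ?_⟩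
    by_cases hjS : (j+1) ∈ S
    · -- the new leaf joins the component
      have hSfil : S.filter (· ≤ (j+1)) = insert (j+1) (S.filter (· ≤ j)) := by
        ext y
        simp only [Finset.mem_filter, Finset.mem_insert]
        constructor
        · rintro ⟨hy, hy2⟩
          rcases Nat.lt_or_ge y (j+1) with h' | h'
          · exact Or.inr ⟨hy, by omega⟩
          · exact Or.inl (by omega)
        · rintro (rfl | ⟨hy, hy2⟩)
          · exact ⟨hjS, le_refl _⟩
          · exact ⟨hy, by omega⟩
      have hbelj1 : belongs M v (j+1) = i := by
        have := Finset.mem_filter.1 (hS ▸ hjS)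
        exact this.2
      have hj1M : (j+1) ∉ M := by
        intro hc
        have := belongs_mem_uniq M v hc hbelj1
        omega
      have hagree : ∀ a' : ι, V a' (j+1) = v (j+1) := by
        intro a'
        exact mismatch_agree V (by omega) (by omega) (hM ▸ hj1M) a' a₀
      have hstep := belongs_step M v (i := i) (by omega) hj1M hbelj1
      -- sibling hypothesis
      have HW : ∀ w : BTree, (u'.IsNode (.node w (.leaf (j+1))) ∨
            u'.IsNode (.node (.leaf (j+1)) w)) →
          (∃ s ∈ S.filter (· ≤ j), s ∈ w.leafList) ∧
          ∀ wl wr, w = BTree.node wl wr →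
            max wl.minLeaf wr.minLeaf ∈ S.filter (· ≤ j) ∧
              m < max wl.minLeaf wr.minLeaf := by
        intro w hw
        have hsib : u'.siblingIdx (j+1) = some w.idx := BTree.siblingIdx_of_sib hu'nd hw
        have hwidx : V a (j+1) = w.idx := by
          show ola (ts a) σ (j+1) = w.idx
          show ((ts a).relabel σ).olaEntry (j+1) = w.idx
          rw [BTree.olaEntry, ← hT, hu']
          simp [hsib]
        have hvw : v (j+1) = w.idx := by rw [← hagree a, hwidx]
        have hb : (v (j+1)).natAbs ∈ S.filter (· ≤ j) := by
          rw [Finset.mem_filter]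
          constructor
          · rw [hS, Finset.mem_filter, Finset.mem_range]
            exact ⟨by omega, hstep.2⟩
          · have := hstep.1
            omega
        cases w with
        | leaf z =>
          have hz : (v (j+1)).natAbs = z := by
            rw [hvw]; simp [BTree.idx]
          constructor
          · exact ⟨(v (j+1)).natAbs, hb, by rw [hz]; simp [BTree.leafList]⟩
          · intro wl wr h
            exact BTree.noConfusion h
        | node wl wr =>
          have hidx : (BTree.node wl wr).idx = -(max wl.minLeaf wr.minLeaf : ℤ) := rfl
          have hnatabs : (v (j+1)).natAbs = max wl.minLeaf wr.minLeaf := by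
            rw [hvw, hidx, ← Nat.cast_max]
            exact (Int.natAbs_neg _).trans (Int.natAbs_natCast _)
          have hbS : max wl.minLeaf wr.minLeaf ∈ S.filter (· ≤ j) := hnatabs ▸ hb
          have hmb : m ≤ max wl.minLeaf wr.minLeaf :=
            hSm _ (Finset.mem_filter.1 hbS).1
          have hmb' : m ≠ max wl.minLeaf wr.minLeaf := by
            intro hc
            apply mismatch_no_neg V (x := j+1) (i := n-1) (j := m) (by omega) (by omega)
              (hM ▸ hj1M) (hM ▸ hmM) (by omega)
            intro a'
            rw [hagree a', hvw, hidx, ← Nat.cast_max, ← hc]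
          constructor
          · refine ⟨max wl.minLeaf wr.minLeaf, hbS, ?_⟩
            rcases max_choice wl.minLeaf wr.minLeaf with h | h <;>
              rw [h] <;> simp [BTree.leafList, BTree.minLeaf_mem]
          · intro wl' wr' h
            injection h with h1 h2
            subst h1; subst h2
            exact ⟨hbS, by omega⟩
      rw [hSfil]
      intro r₁ hr₁
      exact BTree.key hins (S.filter (· ≤ j)) hSj_sub hj1u hu'nd hmSj
        (fun s hs => hSm s (Finset.mem_filter.1 hs).1) (by omega) HW r₀ hr₀ hSr₀ HC r₁ hr₁
    · -- the new leaf does not join the component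
      have hSfil : S.filter (· ≤ (j+1)) = S.filter (· ≤ j) := by
        ext y
        simp only [Finset.mem_filter]
        constructor
        · rintro ⟨hy, hy2⟩
          refine ⟨hy, ?_⟩
          rcases Nat.lt_or_ge y (j+1) with h' | h'
          · omega
          · exact absurd (by omega : y = j + 1) (by rintro rfl; exact hjS hy)
        · rintro ⟨hy, hy2⟩
          exact ⟨hy, by omega⟩
      rw [hSfil]
      intro r₁ hr₁
      intro y hy
      rcases BTree.ins_lca hins (S.filter (· ≤ j)) ⟨m, hmSj⟩ hSj_sub hj1u r₀ r₁ hr₀ hr₁ y hy with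
        rfl | hy'
      · omega
      · exact HC y hy'

/-- Lemma 3 and Corollary 4: in the AAF construction from OLA
vectors, the subtree rooted at the root of `T(L_i)` contains no leaf with
position `< m_i`; consequently the inheritance graph of the constructed forest
has all edges pointing forward and is acyclic. -/
theorem stmt10 {ι : Type} [Fintype ι] [Nonempty ι] (n : ℕ)
    (ts : ι → BTree) (hts : ∀ a, (ts a).IsPhylo n)
    (σ : Equiv.Perm ℕ) (hσ : IsOrdering σ n) (a₀ : ι) :
    let v : ℕ → ℤ := fun j => ola (ts a₀) σ j
    let M : Finset ℕ := mismatch (fun a => ola (ts a) σ) (n - 1)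
    let P : ℕ → Finset ℕ := fun i => (Finset.range n).filter (fun j => belongs M v j = i)
    let edge : Fin (M.card + 1) → Fin (M.card + 1) → Prop := fun i j =>
      i ≠ j ∧ ∃ a : ι, BTree.lcaPos ((ts a).relabel σ) (P i) <+:
        BTree.lcaPos ((ts a).relabel σ) (P j)
    (∀ a : ι, ∀ i ≤ M.card, ∀ u : BTree,
      ((ts a).relabel σ).subtreeAt (((ts a).relabel σ).lcaPos (P i)) = some u →
      ∀ y ∈ u.leafList, mVal M i ≤ y) ∧
    (∀ i j : Fin (M.card + 1), edge i j → i < j) ∧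
    (∀ i : Fin (M.card + 1), ¬ Relation.TransGen edge i i) := by
  intro v M P edge
  have hn : 1 ≤ n := phylo_n_pos (hts a₀)
  have hMel : ∀ x ∈ M, 1 ≤ x ∧ x ≤ n - 1 := fun x hx => mismatch_mem_le _ hx
  have hM1 : ∀ x ∈ M, 1 ≤ x := fun x hx => (hMel x hx).1
  have hbel0 : belongs M v 0 = 0 := by
    rw [belongs_eq]
    rw [if_neg (fun hc : (0:ℕ) ∈ M => absurd (hMel 0 hc).1 (by omega))]
    rw [dif_neg (by omega : ¬ (v 0).natAbs < 0)]
  have hmem0 : mVal M 0 ∈ P 0 := by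
    have : mVal M 0 = 0 := by rw [mVal, if_pos rfl]
    rw [this]
    exact Finset.mem_filter.2 ⟨Finset.mem_range.2 (by omega), hbel0⟩
  have hmemP : ∀ k : ℕ, k ≤ M.card → mVal M k ∈ P k := by
    intro k hk
    rcases Nat.eq_zero_or_pos k with rfl | hk1
    · exact hmem0
    · refine Finset.mem_filter.2 ⟨Finset.mem_range.2 ?_, belongs_mVal M v hk1 hk⟩
      have := (hMel _ (mVal_mem M hk1 hk)).2
      omega
  have H1 : ∀ a : ι, ∀ i ≤ M.card, ∀ u : BTree,
      ((ts a).relabel σ).subtreeAt (((ts a).relabel σ).lcaPos (P i)) = some u →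
      ∀ y ∈ u.leafList, mVal M i ≤ y := by
    intro a i hi u hu y hy
    rcases Nat.eq_zero_or_pos i with rfl | hi1
    · rw [mVal, if_pos rfl]
      exact Nat.zero_le y
    · have hmval : mVal M i ≤ n - 1 := (hMel _ (mVal_mem M hi1 hi)).2
      obtain ⟨u₀, hu₀, hclaim⟩ :=
        main_induction ts hts σ hσ a₀ hi1 hi a (n-1) hmval (le_refl _)
      have hTfull : ((ts a).relabel σ).restrictLe (n-1) = some ((ts a).relabel σ) := by
        apply BTree.restrictLe_eq_self
        intro x hx
        have hphy := relabel_phylo (hts a) hσ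
        rw [← BTree.mem_leafSet, hphy.2, Finset.mem_range] at hx
        omega
      have hu₀' : u₀ = (ts a).relabel σ := by
        rw [hTfull] at hu₀
        injection hu₀ with h
        exact h.symm
      subst hu₀'
      have hclaim' : ∀ r₀ : BTree, ((ts a).relabel σ).subtreeAt
          (((ts a).relabel σ).lcaPos ((P i).filter (· ≤ (n-1)))) = some r₀ →
          ∀ y ∈ r₀.leafList, mVal M i ≤ y := hclaim
      have hPP : (P i).filter (· ≤ (n-1)) = P i := by
        ext z
        constructor
        · intro hz
          exact (Finset.mem_filter.1 hz).1
        · intro hz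
          refine Finset.mem_filter.2 ⟨hz, ?_⟩
          have hzn : z < n := Finset.mem_range.1 (Finset.mem_filter.1 hz).1
          show z ≤ n - 1
          omega
      rw [hPP] at hclaim'
      exact hclaim' u hu y hy
  have H2 : ∀ i j : Fin (M.card + 1), edge i j → i < j := by
    rintro i j ⟨hne, a, hpre⟩
    have hTphy := relabel_phylo (hts a) hσ
    have hPsub : ∀ k : ℕ, P k ⊆ ((ts a).relabel σ).leafSet := by
      intro k z hz
      rw [hTphy.2]
      exact (Finset.mem_filter.1 hz).1
    have hile : (i : ℕ) ≤ M.card := by omega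
    have hjle : (j : ℕ) ≤ M.card := by omega
    obtain ⟨c, hc, hcsub⟩ :=
      BTree.lca_exists ⟨_, hmemP (i : ℕ) hile⟩ (hPsub (i : ℕ))
    obtain ⟨d, hd, hdsub⟩ :=
      BTree.lca_exists ⟨_, hmemP (j : ℕ) hjle⟩ (hPsub (j : ℕ))
    obtain ⟨tail, htail⟩ := hpre
    have hd' : c.subtreeAt tail = some d := by
      rw [← htail, BTree.subtreeAt_append, hc] at hd
      simpa using hd
    have hsub := (BTree.subtreeAt_isNode hd').leaf_sub
    have hmvalj : mVal M (j : ℕ) ∈ c.leafList :=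
      hsub _ (BTree.mem_leafSet.1 (hdsub (hmemP (j : ℕ) hjle)))
    have hij : mVal M (i : ℕ) ≤ mVal M (j : ℕ) := H1 a (i : ℕ) hile c hc _ hmvalj
    rcases lt_trichotomy i j with h | h | h
    · exact h
    · exact absurd h hne
    · exfalso
      have hji : (j : ℕ) < (i : ℕ) := h
      have := mVal_strict_mono M hM1 hji hile
      omega
  refine ⟨H1, H2, ?_⟩
  intro i hcyc
  have H3 : ∀ p q : Fin (M.card + 1), Relation.TransGen edge p q → p < q := by
    intro p q h
    induction h with
    | single h => exact H2 _ _ h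
    | tail h1 h2 ih => exact lt_trans ih (H2 _ _ h2)
  exact absurd (H3 i i hcyc) (lt_irrefl i)

end OLA
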